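/- Let A = (A_n, i) be a tower of abelian groups and A_n^(r) = image(i^r : A_{n+r} → A_n). Then there is a short exact sequence 0 → lim¹_n (lim_r A_n^(r)) → lim¹_n A_n → lim_n (lim¹_r A_n^(r)) → 0. -/

import Mathlib

/-- The map `1 - i` on the product of a tower of abelian groups. -/
def towerOneMinus (A : ℕ → Type*) [∀ n, AddCommGroup (A n)]
    (i : ∀ n, A (n + 1) →+ A n) : (∀ n, A n) →+ (∀ n, A n) :=
  AddMonoidHom.mk' (fun a n => a n - i n (a (n + 1))) (by
    intro a b; funext n; simp only [Pi.add_apply, map_add]; abel)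

/-- `A_n^(r) = image (i^r : A_{n+r} → A_n)`, defined by
`A_n^(0) = A_n` and `A_n^(r+1) = i_n (A_{n+1}^(r))`. -/
def towerImage (A : ℕ → Type*) [∀ n, AddCommGroup (A n)]
    (i : ∀ n, A (n + 1) →+ A n) : ℕ → ∀ n, AddSubgroup (A n)
  | 0 => fun _ => ⊤
  | (r + 1) => fun n => (towerImage A i r (n + 1)).map (i n)

variable (A : ℕ → Type*) [∀ n, AddCommGroup (A n)] (i : ∀ n, A (n + 1) →+ A n)

theorem towerImage_antitone (r n : ℕ) :
    towerImage A i (r + 1) n ≤ towerImage A i r n := by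
  induction r generalizing n with
  | zero => exact le_top
  | succ r ih => exact AddSubgroup.map_mono (ih (n + 1))

/-- For fixed `n`, the decreasing tower `r ↦ A_n^(r)` (bonding maps the
inclusions); this is the map `1 - incl` on `∏_r A_n^(r)`, whose cokernel is
`lim¹_r A_n^(r)`. -/
def towerImageOneMinus (n : ℕ) :
    (∀ r, towerImage A i r n) →+ (∀ r, towerImage A i r n) :=
  AddMonoidHom.mk' (fun x r =>
      x r - ⟨(x (r + 1) : A n), towerImage_antitone A i r n (x (r + 1)).2⟩) (by
    intro x y
    funext r
    apply Subtype.ext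
    simp only [Pi.add_apply, AddSubgroup.coe_add, AddSubgroup.coe_sub]
    abel)

/-- `lim¹_r A_n^(r)`. -/
def lim1Image (n : ℕ) : Type _ :=
  (∀ r, towerImage A i r n) ⧸ (towerImageOneMinus A i n).range

noncomputable instance (n : ℕ) : AddCommGroup (lim1Image A i n) :=
  QuotientAddGroup.Quotient.addCommGroup _

theorem towerImage_step (r n : ℕ) (x : A (n + 1)) (hx : x ∈ towerImage A i r (n + 1)) :
    i n x ∈ towerImage A i r n :=
  towerImage_antitone A i r n (AddSubgroup.mem_map_of_mem (i n) hx)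

/-- The levelwise map `∏_r A_{n+1}^(r) → ∏_r A_n^(r)` induced by `i`. -/
def towerImagePiMap (n : ℕ) :
    (∀ r, towerImage A i r (n + 1)) →+ (∀ r, towerImage A i r n) :=
  AddMonoidHom.mk' (fun x r => ⟨i n (x r), towerImage_step A i r n _ (x r).2⟩) (by
    intro x y
    funext r
    apply Subtype.ext
    simp)

/-- The map `lim¹_r A_{n+1}^(r) → lim¹_r A_n^(r)` induced by `i`;
the towers `n ↦ lim¹_r A_n^(r)` are formed with these bonding maps. -/
def lim1ImageMap (n : ℕ) : lim1Image A i (n + 1) →+ lim1Image A i n :=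
  QuotientAddGroup.map _ _ (towerImagePiMap A i n) (by
    rintro x ⟨y, rfl⟩
    refine ⟨towerImagePiMap A i n y, ?_⟩
    funext r
    apply Subtype.ext
    simp only [towerImageOneMinus, towerImagePiMap, AddMonoidHom.mk'_apply,
      AddSubgroup.coe_sub, map_sub])

/-- `lim_r A_n^(r) = ⋂_r A_n^(r)` as a subgroup of `A_n`. -/
def limImage (n : ℕ) : AddSubgroup (A n) := ⨅ r, towerImage A i r n

/-- The bonding map of the tower `n ↦ lim_r A_n^(r)`, a restriction of `i`. -/
def limImageMap (n : ℕ) : limImage A i (n + 1) →+ limImage A i n :=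
  AddMonoidHom.codRestrict ((i n).comp (limImage A i (n + 1)).subtype) _ (by
    rintro ⟨x, hx⟩
    rw [limImage, AddSubgroup.mem_iInf] at hx ⊢
    exact fun r => towerImage_step A i r n x (hx r))

/-- `lim¹` of the tower `n ↦ lim_r A_n^(r)`. -/
def lim1OfLimImage : Type _ :=
  (∀ n, limImage A i n) ⧸
    (towerOneMinus (fun n => limImage A i n) (fun n => limImageMap A i n)).range

noncomputable instance : AddCommGroup (lim1OfLimImage A i) :=
  QuotientAddGroup.Quotient.addCommGroup _

/-- `lim¹_n A_n`. -/
def lim1Tower : Type _ := (∀ n, A n) ⧸ (towerOneMinus A i).range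

noncomputable instance : AddCommGroup (lim1Tower A i) :=
  QuotientAddGroup.Quotient.addCommGroup _

/-- `lim_n (lim¹_r A_n^(r))`, the inverse limit of the tower `n ↦ lim¹_r A_n^(r)`. -/
noncomputable def limOfLim1Image : AddSubgroup (∀ n, lim1Image A i n) :=
  (towerOneMinus (fun n => lim1Image A i n) (fun n => lim1ImageMap A i n)).ker

/-- The map `lim¹_n (lim_r A_n^(r)) → lim¹_n A_n` induced by the inclusions
`lim_r A_n^(r) ⊆ A_n`. -/
def lim1InclMap : lim1OfLimImage A i →+ lim1Tower A i :=
  QuotientAddGroup.map _ _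
    (AddMonoidHom.mk' (fun a n => ((a n : A n))) (by intro a b; funext n; simp)) (by
      rintro x ⟨y, rfl⟩
      refine ⟨fun n => (y n : A n), ?_⟩
      funext n
      show (y n : A n) - i n (y (n + 1)) = ((_ : limImage A i n) : A n)
      simp only [towerOneMinus, AddMonoidHom.mk'_apply, AddSubgroup.coe_sub]
      rfl)

/-! ### Auxiliary development -/

/-- `diagPow A i a r n = i^r (a (n + r))`. -/
def diagPow (a : ∀ n, A n) : ℕ → ∀ n, A n
  | 0 => a
  | (r + 1) => fun n => i n (diagPow a r (n + 1))

theorem diagPow_add (a b : ∀ n, A n) (r n : ℕ) :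
    diagPow A i (a + b) r n = diagPow A i a r n + diagPow A i b r n := by
  induction r generalizing n with
  | zero => rfl
  | succ r ih => simp only [diagPow, ih, map_add]

theorem diagPow_mem (a : ∀ n, A n) (r n : ℕ) :
    diagPow A i a r n ∈ towerImage A i r n := by
  induction r generalizing n with
  | zero => trivial
  | succ r ih => exact AddSubgroup.mem_map_of_mem (i n) (ih (n + 1))

theorem diagPow_oneMinus (a : ∀ n, A n) (r n : ℕ) :
    diagPow A i (towerOneMinus A i a) r n
      = diagPow A i a r n - diagPow A i a (r + 1) n := by
  induction r generalizing n with
  | zero => rfl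
  | succ r ih => simp only [diagPow, ih, map_sub]

theorem diagPow_mem_of_mem (a : ∀ n, A n) (s : ℕ)
    (h : ∀ m, a m ∈ towerImage A i s m) (r n : ℕ) :
    diagPow A i a r n ∈ towerImage A i s n := by
  induction r generalizing n with
  | zero => exact h n
  | succ r ih => exact towerImage_step A i s n _ (ih (n + 1))

/-- Depth lemma: if `g_n - i g_{n+1} ∈ A_n^(r)` for all `n`, then `g_n ∈ A_n^(r)`. -/
theorem mem_of_sub_mem (g : ∀ n, A n) (r : ℕ)
    (h : ∀ n, g n - i n (g (n + 1)) ∈ towerImage A i r n) (n : ℕ) :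
    g n ∈ towerImage A i r n := by
  have key : ∀ j n, g n - diagPow A i g j n ∈ towerImage A i r n := by
    intro j
    induction j with
    | zero =>
      intro n
      show g n - g n ∈ towerImage A i r n
      simpa using (towerImage A i r n).zero_mem
    | succ j ih =>
      intro n
      have h1 : diagPow A i g j n - diagPow A i g (j + 1) n ∈ towerImage A i r n := by
        rw [← diagPow_oneMinus]
        exact diagPow_mem_of_mem A i _ r (fun m => h m) j n
      have h2 : g n - diagPow A i g (j + 1) n
          = g n - diagPow A i g j n + (diagPow A i g j n - diagPow A i g (j + 1) n) := by
        abel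
      rw [h2]
      exact add_mem (ih n) h1
  have h3 := add_mem (key r n) (diagPow_mem A i g r n)
  simpa using h3

/-- A helper for equalities in `lim1Image`. -/
theorem lim1Image_mk_eq {n : ℕ} (x y : ∀ r, towerImage A i r n)
    (z : ∀ r, towerImage A i r n) (hz : towerImageOneMinus A i n z = y - x) :
    (QuotientAddGroup.mk x : lim1Image A i n) = QuotientAddGroup.mk y := by
  refine (QuotientAddGroup.eq).mpr ?_
  rw [neg_add_eq_sub]
  exact ⟨z, hz⟩

theorem lim1Image_mk_eq_zero {n : ℕ} (x : ∀ r, towerImage A i r n)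
    (z : ∀ r, towerImage A i r n) (hz : towerImageOneMinus A i n z = x) :
    (QuotientAddGroup.mk x : lim1Image A i n) = 0 :=
  (QuotientAddGroup.eq_zero_iff x).mpr ⟨z, hz⟩

/-- The element of `∏_r A_n^(r)` given by `r ↦ i^r (a (n+r))`. -/
def psiPack (a : ∀ n, A n) (n : ℕ) : ∀ r, towerImage A i r n :=
  fun r => ⟨diagPow A i a r n, diagPow_mem A i a r n⟩

theorem psiPack_sub_shift (a : ∀ n, A n) (n : ℕ) :
    towerImageOneMinus A i n (psiPack A i a n)
      = towerImagePiMap A i n (psiPack A i a (n + 1)) - psiPack A i a n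
        + towerImageOneMinus A i n (psiPack A i a n)
        + (psiPack A i a n - towerImagePiMap A i n (psiPack A i a (n + 1))) := by
  abel

theorem psiPack_shift (a : ∀ n, A n) (n : ℕ) :
    psiPack A i a n - towerImagePiMap A i n (psiPack A i a (n + 1))
      = towerImageOneMinus A i n (psiPack A i a n) := by
  funext r
  apply Subtype.ext
  show diagPow A i a r n - i n (diagPow A i a r (n + 1))
      = ((psiPack A i a n r : A n) - (psiPack A i a n (r + 1) : A n))
  rfl

/-- The underlying map of `ψ`. -/
noncomputable def psi0 : (∀ n, A n) →+ ∀ n, lim1Image A i n :=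
  AddMonoidHom.mk' (fun a n => QuotientAddGroup.mk (psiPack A i a n)) (by
    intro a b
    funext n
    show (QuotientAddGroup.mk (psiPack A i (a + b) n) : lim1Image A i n)
        = QuotientAddGroup.mk (psiPack A i a n) + QuotientAddGroup.mk (psiPack A i b n)
    have : psiPack A i (a + b) n = psiPack A i a n + psiPack A i b n := by
      funext r
      apply Subtype.ext
      exact diagPow_add A i a b r n
    rw [this]
    rfl)

theorem lim1ImageMap_mk (n : ℕ) (x : ∀ r, towerImage A i r (n + 1)) :
    lim1ImageMap A i n (QuotientAddGroup.mk x)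
      = (QuotientAddGroup.mk (towerImagePiMap A i n x) : lim1Image A i n) :=
  rfl

theorem psi0_mem_ker (a : ∀ n, A n) : psi0 A i a ∈ limOfLim1Image A i := by
  rw [limOfLim1Image, AddMonoidHom.mem_ker]
  funext n
  show psi0 A i a n - lim1ImageMap A i n (psi0 A i a (n + 1)) = 0
  have h2 : psi0 A i a n = lim1ImageMap A i n (psi0 A i a (n + 1)) := by
    refine lim1Image_mk_eq A i _ _ (-(psiPack A i a n)) ?_
    rw [map_neg, ← psiPack_shift, neg_sub]
  rw [h2]
  exact sub_self _

/-- `ψ` before passing to the quotient. -/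
noncomputable def psi1 : (∀ n, A n) →+ limOfLim1Image A i :=
  (psi0 A i).codRestrict _ (psi0_mem_ker A i)

theorem psi1_vanish (x : ∀ n, A n) (hx : x ∈ (towerOneMinus A i).range) :
    psi1 A i x = 0 := by
  obtain ⟨b, rfl⟩ := hx
  apply Subtype.ext
  funext n
  show (QuotientAddGroup.mk (psiPack A i (towerOneMinus A i b) n) : lim1Image A i n) = 0
  refine lim1Image_mk_eq_zero A i _ (psiPack A i b n) ?_
  rw [← psiPack_shift]
  funext r
  apply Subtype.ext
  show diagPow A i b r n - i n (diagPow A i b r (n + 1))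
      = diagPow A i (towerOneMinus A i b) r n
  rw [diagPow_oneMinus]
  rfl

/-- The map `ψ : lim¹_n A_n → lim_n lim¹_r A_n^(r)`. -/
noncomputable def psi : lim1Tower A i →+ limOfLim1Image A i :=
  QuotientAddGroup.lift _ (psi1 A i) (psi1_vanish A i)

theorem psi_mk (a : ∀ n, A n) :
    psi A i (QuotientAddGroup.mk a) = psi1 A i a := rfl

/-- A helper for equalities in `lim1Tower`. -/
theorem lim1Tower_mk_eq (x y : ∀ n, A n) (b : ∀ n, A n)
    (hb : towerOneMinus A i b = y - x) :
    (QuotientAddGroup.mk x : lim1Tower A i) = QuotientAddGroup.mk y := by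
  refine (QuotientAddGroup.eq).mpr ?_
  rw [neg_add_eq_sub]
  exact ⟨b, hb⟩

theorem lim1InclMap_mk (x : ∀ n, limImage A i n) :
    lim1InclMap A i (QuotientAddGroup.mk x)
      = (QuotientAddGroup.mk (fun n => (x n : A n)) : lim1Tower A i) :=
  rfl

theorem mem_limImage_iff (n : ℕ) (x : A n) :
    x ∈ limImage A i n ↔ ∀ r, x ∈ towerImage A i r n := by
  rw [limImage, AddSubgroup.mem_iInf]

/-- For a tower `A = (A_n, i)` with images
`A_n^(r) = i^r(A_{n+r})`, there is a short exact sequence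
`0 → lim¹_n (lim_r A_n^(r)) → lim¹_n A_n → lim_n (lim¹_r A_n^(r)) → 0`,
the first map being induced by the inclusions `lim_r A_n^(r) ⊆ A_n`. -/
theorem stmt_6 (A : ℕ → Type) [∀ n, AddCommGroup (A n)]
    (i : ∀ n, A (n + 1) →+ A n) :
    ∃ ψ : lim1Tower A i →+ limOfLim1Image A i,
      Function.Injective (lim1InclMap A i) ∧
      Function.Exact (lim1InclMap A i) ψ ∧
      Function.Surjective ψ := by
  refine ⟨psi A i, ?_, ?_, ?_⟩
  · -- Injectivity of the inclusion-induced map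
    rw [injective_iff_map_eq_zero]
    intro q hq
    obtain ⟨ℓ, rfl⟩ := QuotientAddGroup.mk_surjective q
    have hq' : (QuotientAddGroup.mk (fun n => (ℓ n : A n)) : lim1Tower A i) = 0 := by
      rw [← lim1InclMap_mk]; exact hq
    obtain ⟨b, hb⟩ := AddMonoidHom.mem_range.mp
      ((QuotientAddGroup.eq_zero_iff _).mp hq')
    have hbn : ∀ n, b n - i n (b (n + 1)) = (ℓ n : A n) := fun n => congrFun hb n
    have claim : ∀ r n, b n ∈ towerImage A i r n := by
      intro r
      induction r with
      | zero => intro n; trivial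
      | succ r ih =>
        intro n
        have h1 : i n (b (n + 1)) ∈ towerImage A i (r + 1) n :=
          AddSubgroup.mem_map_of_mem (i n) (ih (n + 1))
        have h2 : (ℓ n : A n) ∈ towerImage A i (r + 1) n :=
          (mem_limImage_iff A i n _).mp (ℓ n).2 (r + 1)
        have h3 : b n = i n (b (n + 1)) + (ℓ n : A n) := by
          rw [← hbn n]; abel
        rw [h3]
        exact add_mem h1 h2
    refine (QuotientAddGroup.eq_zero_iff ℓ).mpr ?_
    refine ⟨fun n => ⟨b n, (mem_limImage_iff A i n _).mpr (fun r => claim r n)⟩, ?_⟩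
    funext n
    apply Subtype.ext
    show b n - i n (b (n + 1)) = (ℓ n : A n)
    exact hbn n
  · -- Exactness in the middle
    intro y
    obtain ⟨aa, rfl⟩ := QuotientAddGroup.mk_surjective y
    constructor
    · intro hy
      have hval : psi0 A i aa = 0 := congrArg Subtype.val hy
      have hv : ∀ n, (QuotientAddGroup.mk (psiPack A i aa n) : lim1Image A i n) = 0 :=
        fun n => congrFun hval n
      choose T hT using fun n =>
        AddMonoidHom.mem_range.mp ((QuotientAddGroup.eq_zero_iff _).mp (hv n))
      have hTc : ∀ n r, (T n r : A n) - (T n (r + 1) : A n) = diagPow A i aa r n :=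
        fun n r => congrArg Subtype.val (congrFun (hT n) r)
      have hconst : ∀ n r, i n ((T (n + 1) r : A (n + 1))) - (T n (r + 1) : A n)
          = i n ((T (n + 1) 0 : A (n + 1))) - (T n 1 : A n) := by
        intro n r
        induction r with
        | zero => rfl
        | succ r ih =>
          have step : i n ((T (n + 1) (r + 1) : A (n + 1))) - (T n (r + 2) : A n)
              = (i n (T (n + 1) r) - (T n (r + 1) : A n))
                - (i n ((T (n + 1) r : A (n + 1)) - (T (n + 1) (r + 1) : A (n + 1)))
                  - ((T n (r + 1) : A n) - (T n (r + 2) : A n))) := by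
            rw [map_sub]; abel
          rw [step, hTc (n + 1) r, hTc n (r + 1)]
          have hdiag : i n (diagPow A i aa r (n + 1)) = diagPow A i aa (r + 1) n := rfl
          rw [hdiag, sub_self, sub_zero]
          exact ih
      have eMem : ∀ n, i n ((T (n + 1) 0 : A (n + 1))) - (T n 1 : A n) ∈ limImage A i n := by
        intro n
        rw [mem_limImage_iff]
        intro r
        match r with
        | 0 => trivial
        | (r + 1) =>
          rw [← hconst n r]
          exact sub_mem (AddSubgroup.mem_map_of_mem (i n) (T (n + 1) r).2) (T n (r + 1)).2
      refine ⟨QuotientAddGroup.mk (fun n =>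
        (⟨i n ((T (n + 1) 0 : A (n + 1))) - (T n 1 : A n), eMem n⟩ : limImage A i n)), ?_⟩
      rw [lim1InclMap_mk]
      refine lim1Tower_mk_eq A i _ _ (fun n => (T n 0 : A n)) ?_
      funext n
      show (T n 0 : A n) - i n (T (n + 1) 0)
          = aa n - (i n ((T (n + 1) 0 : A (n + 1))) - (T n 1 : A n))
      have h0 : aa n = (T n 0 : A n) - (T n 1 : A n) := (hTc n 0).symm
      rw [h0]
      abel
    · rintro ⟨x, hx⟩
      obtain ⟨ℓ, rfl⟩ := QuotientAddGroup.mk_surjective x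
      rw [← hx, lim1InclMap_mk, psi_mk]
      apply Subtype.ext
      funext n
      show (QuotientAddGroup.mk (psiPack A i (fun m => (ℓ m : A m)) n) : lim1Image A i n) = 0
      have hm : ∀ r k, diagPow A i (fun m => (ℓ m : A m)) k n ∈ towerImage A i r n :=
        fun r k => diagPow_mem_of_mem A i _ r
          (fun m => (mem_limImage_iff A i m _).mp (ℓ m).2 r) k n
      refine lim1Image_mk_eq_zero A i _
        (fun r => ⟨-∑ k ∈ Finset.range r, diagPow A i (fun m => (ℓ m : A m)) k n,
          neg_mem (sum_mem (fun k _ => hm r k))⟩) ?_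
      funext r
      apply Subtype.ext
      show (-∑ k ∈ Finset.range r, diagPow A i (fun m => (ℓ m : A m)) k n)
          - (-∑ k ∈ Finset.range (r + 1), diagPow A i (fun m => (ℓ m : A m)) k n)
          = diagPow A i (fun m => (ℓ m : A m)) r n
      rw [Finset.sum_range_succ]
      abel
  · -- Surjectivity
    intro c
    have hker : towerOneMinus (fun n => lim1Image A i n) (fun n => lim1ImageMap A i n)
        (c : ∀ n, lim1Image A i n) = 0 := by
      have h : (c : ∀ n, lim1Image A i n) ∈ (towerOneMinus (fun n => lim1Image A i n)
          (fun n => lim1ImageMap A i n)).ker := c.2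
      rwa [AddMonoidHom.mem_ker] at h
    have hcn : ∀ n, (c : ∀ n, lim1Image A i n) n
        - lim1ImageMap A i n ((c : ∀ n, lim1Image A i n) (n + 1)) = 0 :=
      fun n => congrFun hker n
    choose u hu using fun n =>
      QuotientAddGroup.mk_surjective ((c : ∀ n, lim1Image A i n) n)
    have hz : ∀ n, (QuotientAddGroup.mk (u n - towerImagePiMap A i n (u (n + 1)))
        : lim1Image A i n) = 0 := by
      intro n
      have hsplit : (QuotientAddGroup.mk (u n - towerImagePiMap A i n (u (n + 1)))
          : lim1Image A i n)
          = QuotientAddGroup.mk (u n)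
            - QuotientAddGroup.mk (towerImagePiMap A i n (u (n + 1))) := rfl
      rw [hsplit, hu n, ← lim1ImageMap_mk, hu (n + 1)]
      exact hcn n
    choose v hv using fun n =>
      AddMonoidHom.mem_range.mp ((QuotientAddGroup.eq_zero_iff _).mp (hz n))
    have hvc : ∀ n r, (u n r : A n) - i n (u (n + 1) r)
        = (v n r : A n) - (v n (r + 1) : A n) :=
      fun n r => (congrArg Subtype.val (congrFun (hv n) r)).symm
    set a : ∀ m, A m := fun m => (v m 0 : A m) with ha
    set t : ∀ n, ℕ → A n :=
      fun n r => ∑ k ∈ Finset.range r, ((u n k : A n) - diagPow A i a k n) with htdef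
    have hts : ∀ r n, t n r - i n (t (n + 1) r) = diagPow A i a r n - (v n r : A n) := by
      intro r n
      have expand : t n r - i n (t (n + 1) r)
          = ∑ k ∈ Finset.range r, (((v n k : A n) - diagPow A i a k n)
              - ((v n (k + 1) : A n) - diagPow A i a (k + 1) n)) := by
        rw [htdef]
        simp only [map_sum, ← Finset.sum_sub_distrib]
        refine Finset.sum_congr rfl fun k _ => ?_
        have h2 : i n (diagPow A i a k (n + 1)) = diagPow A i a (k + 1) n := rfl
        rw [map_sub, h2, sub_sub_sub_comm, hvc n k]
        abel
      rw [expand, Finset.sum_range_sub' (fun k => (v n k : A n) - diagPow A i a k n) r]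
      have h00 : (v n 0 : A n) - diagPow A i a 0 n = 0 := sub_self _
      rw [h00, zero_sub, neg_sub]
    have htm : ∀ r n, t n r ∈ towerImage A i r n := by
      intro r
      refine mem_of_sub_mem A i (fun n => t n r) r (fun n => ?_)
      rw [hts r n]
      exact sub_mem (diagPow_mem A i a r n) (v n r).2
    refine ⟨QuotientAddGroup.mk a, ?_⟩
    rw [psi_mk]
    apply Subtype.ext
    funext n
    show (QuotientAddGroup.mk (psiPack A i a n) : lim1Image A i n)
        = (c : ∀ n, lim1Image A i n) n
    rw [← hu n]
    refine (lim1Image_mk_eq A i (u n) (psiPack A i a n)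
      (fun r => ⟨t n r, htm r n⟩) ?_).symm
    funext r
    apply Subtype.ext
    show t n r - t n (r + 1) = diagPow A i a r n - (u n r : A n)
    have hsucc : t n (r + 1) = t n r + ((u n r : A n) - diagPow A i a r n) :=
      Finset.sum_range_succ _ r
    rw [hsucc]
    abel
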